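/- (Theorem 1, lower bound.) Let f_W be an L-layer ReLU network with weight matrices W_1, …, W_L, let D and D_edge be finite disjoint sets of inputs, and for each x ∈ D_edge let ε(x) be a perturbation vector. Fix a layer l and for an input z write z^{(l−1)} for its (l−1)-th layer activation under W. Suppose W'_l is any matrix satisfying W'_l x^{(l−1)} = W_l x^{(l−1)} for all x ∈ D and W'_l x^{(l−1)} = W_l (x + ε(x))^{(l−1)} for all x ∈ D_edge. Then for every x ∈ D_edge and x' ∈ D with x^{(l−1)} ≠ x'^{(l−1)}, the operator norm of W_l − W'_l is at least ‖W_l((x + ε(x))^{(l−1)} − x^{(l−1)})‖ / ‖x^{(l−1)} − x'^{(l−1)}‖. -/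

import Mathlib

open Matrix

/-- The ReLU function `σ(t) = max(t, 0)`. -/
def relu (t : ℝ) : ℝ := max t 0

/-- Layer activations of a ReLU network with layer dimensions `d` and weight
matrices `W` (the `(l+1)`-st layer has matrix `W l : ℝ^{d (l+1) × d l}`):
`x^{(0)} = x` and `x^{(l+1)} = σ(W_{l+1} x^{(l)})` componentwise. -/
def layerAct (d : ℕ → ℕ) (W : ∀ l : ℕ, Matrix (Fin (d (l + 1))) (Fin (d l)) ℝ) :
    (l : ℕ) → (Fin (d 0) → ℝ) → (Fin (d l) → ℝ)
  | 0, x => x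
  | l + 1, x => fun i => relu (((W l).mulVec (layerAct d W l x)) i)

/-- The Euclidean norm of a real vector. -/
noncomputable def euclNorm {ι : Type*} [Fintype ι] (v : ι → ℝ) : ℝ :=
  Real.sqrt (∑ i, (v i) ^ 2)

/-- The operator norm of a real matrix with respect to Euclidean norms. -/
noncomputable def matOpNorm {m n : Type*} [Fintype m] [Fintype n] [DecidableEq n]
    (M : Matrix m n ℝ) : ℝ :=
  ‖LinearMap.toContinuousLinearMap (Matrix.toEuclideanLin M)‖

lemma euclNorm_eq {ι : Type*} [Fintype ι] (v : ι → ℝ) :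
    euclNorm v = ‖(WithLp.equiv 2 (ι → ℝ)).symm v‖ := by
  rw [EuclideanSpace.norm_eq, euclNorm]
  congr 1
  refine Finset.sum_congr rfl fun i _ => ?_
  rw [Real.norm_eq_abs, sq_abs]
  rfl

/-- **Theorem 1, lower bound.**  Fix a layer `l = k + 1 ≤ L` of an
`L`-layer ReLU network `W`, and write `z^{(l−1)} = layerAct d W k z` for the
`(l−1)`-th layer activation of an input `z`.  Suppose `M` (playing the role of
`W'_l`) satisfies `M x^{(l−1)} = W_l x^{(l−1)}` for all `x ∈ D` and
`M x^{(l−1)} = W_l (x + ε(x))^{(l−1)}` for all `x ∈ Dedge`.  Then for every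
`x ∈ Dedge` and `x' ∈ D` with `x^{(l−1)} ≠ x'^{(l−1)}`,
`‖W_l − M‖ ≥ ‖W_l ((x + ε(x))^{(l−1)} − x^{(l−1)})‖ / ‖x^{(l−1)} − x'^{(l−1)}‖`. -/
theorem backdoor_perturbation_lower_bound
    (L : ℕ) (d : ℕ → ℕ)
    (W : ∀ l : ℕ, Matrix (Fin (d (l + 1))) (Fin (d l)) ℝ)
    [DecidableEq (Fin (d 0) → ℝ)]
    (D Dedge : Finset (Fin (d 0) → ℝ)) (hdisj : Disjoint D Dedge)
    (εf : (Fin (d 0) → ℝ) → (Fin (d 0) → ℝ))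
    (k : ℕ) (hk : k + 1 ≤ L)
    (M : Matrix (Fin (d (k + 1))) (Fin (d k)) ℝ)
    (h₁ : ∀ x ∈ D, M.mulVec (layerAct d W k x) = (W k).mulVec (layerAct d W k x))
    (h₂ : ∀ x ∈ Dedge,
      M.mulVec (layerAct d W k x) = (W k).mulVec (layerAct d W k (x + εf x)))
    (x x' : Fin (d 0) → ℝ) (hx : x ∈ Dedge) (hx' : x' ∈ D)
    (hne : layerAct d W k x ≠ layerAct d W k x') :
    euclNorm ((W k).mulVec (layerAct d W k (x + εf x) - layerAct d W k x)) /
        euclNorm (layerAct d W k x - layerAct d W k x')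
      ≤ matOpNorm (W k - M) := by
  set u := layerAct d W k x
  set v := layerAct d W k x'
  set w := layerAct d W k (x + εf x)
  have key : (W k - M).mulVec (u - v) = -((W k).mulVec (w - u)) := by
    rw [Matrix.sub_mulVec, Matrix.mulVec_sub, Matrix.mulVec_sub, Matrix.mulVec_sub,
      h₁ x' hx', h₂ x hx]
    abel
  have hden : 0 < euclNorm (u - v) := by
    rw [euclNorm_eq]
    rw [norm_pos_iff]
    intro h
    apply hne
    have := congrArg (WithLp.equiv 2 (Fin (d k) → ℝ)) h
    simp at this
    exact sub_eq_zero.mp this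
  rw [div_le_iff₀ hden]
  have := (LinearMap.toContinuousLinearMap (Matrix.toEuclideanLin (W k - M))).le_opNorm
      ((WithLp.equiv 2 (Fin (d k) → ℝ)).symm (u - v))
  simp only [LinearMap.coe_toContinuousLinearMap', WithLp.equiv_symm_apply,
    Matrix.toEuclideanLin_apply_piLp_toLp]
    at this
  rw [key] at this
  calc euclNorm ((W k).mulVec (w - u))
      = ‖(WithLp.equiv 2 (Fin (d (k+1)) → ℝ)).symm (-((W k).mulVec (w - u)))‖ := by
        rw [euclNorm_eq,
          show (WithLp.equiv 2 (Fin (d (k+1)) → ℝ)).symm (-((W k).mulVec (w - u)))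
            = -((WithLp.equiv 2 (Fin (d (k+1)) → ℝ)).symm ((W k).mulVec (w - u))) from rfl,
          norm_neg]
    _ ≤ matOpNorm (W k - M) * euclNorm (u - v) := by
        rw [euclNorm_eq (u - v)]; exact this
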